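/- Let g = V₁ ⊕ V₂ be a step-2 stratified Lie algebra with dim V₁ = r ≥ 3 and dim V₂ = 2. Then the set R₁ of vectors X ∈ V₁ with dim [X, V₁] ≤ 1 is contained in a proper algebraic subvariety of V₁; in particular R₁ ≠ V₁. -/

import Mathlib

/-- The span of brackets `⁅x, y⁆` with `x ∈ P`, `y ∈ Q`. -/
def bracketSpan {L : Type*} [LieRing L] [LieAlgebra ℝ L] (P Q : Submodule ℝ L) :
    Submodule ℝ L :=
  Submodule.span ℝ {z | ∃ x ∈ P, ∃ y ∈ Q, z = ⁅x, y⁆}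

section Aux

open Module Submodule

/-- dual pair for a linearly independent pair -/
lemma auxDualPair {L : Type*} [AddCommGroup L] [Module ℝ L] {u v : L}
    (h : LinearIndependent ℝ ![u, v]) :
    ∃ lam mu : Module.Dual ℝ L, lam u = 1 ∧ lam v = 0 ∧ mu u = 0 ∧ mu v = 1 := by
  have hker : LinearMap.ker (Finsupp.linearCombination ℝ ![u, v]) = ⊥ :=
    LinearMap.ker_eq_bot.mpr h
  obtain ⟨g, hg⟩ := LinearMap.exists_leftInverse_of_injective _ hker
  have key : ∀ (i : Fin 2) (c : ℝ), g (c • ![u, v] i) = Finsupp.single i c := by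
    intro i c
    have := congrArg (fun f => f (Finsupp.single i c)) (congrArg (fun m => m.toFun) hg)
    simpa [Finsupp.linearCombination_single] using this
  refine ⟨(Finsupp.lapply 0).comp g, (Finsupp.lapply 1).comp g, ?_, ?_, ?_, ?_⟩ <;>
    simp only [LinearMap.comp_apply, Finsupp.lapply_apply]
  · have := key 0 1; simp at this; rw [this]; simp
  · have := key 1 1; simp at this; rw [this]; simp [Finsupp.single_apply]
  · have := key 0 1; simp at this; rw [this]; simp [Finsupp.single_apply]
  · have := key 1 1; simp at this; rw [this]; simp

/-- independent pair inside a set whose span has finrank ≥ 2 -/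
lemma auxIndepPair {L : Type*} [AddCommGroup L] [Module ℝ L] (S : Set L)
    (hS : 2 ≤ Module.finrank ℝ (Submodule.span ℝ S)) :
    ∃ u ∈ S, ∃ v ∈ S, LinearIndependent ℝ ![u, v] := by
  obtain ⟨t, hts, hspan, hli⟩ := exists_linearIndependent ℝ S
  have htnt : t.Nontrivial := by
    by_contra hsub
    rw [Set.not_nontrivial_iff] at hsub
    have hle : Module.finrank ℝ (Submodule.span ℝ t) ≤ 1 := by
      rcases hsub.eq_empty_or_singleton with rfl | ⟨a, rfl⟩
      · rw [Submodule.span_empty, finrank_bot]; omega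
      · rcases eq_or_ne a 0 with rfl | ha
        · rw [Submodule.span_singleton_eq_bot.mpr rfl, finrank_bot]; omega
        · simp [finrank_span_singleton ha]
    rw [hspan] at hle; omega
  obtain ⟨u, hu, v, hv, huv⟩ := htnt
  refine ⟨u, hts hu, v, hts hv, ?_⟩
  have hinj : Function.Injective (![(⟨u, hu⟩ : t), ⟨v, hv⟩] : Fin 2 → t) := by
    intro i j hij
    fin_cases i <;> fin_cases j <;> simp_all
  have := hli.comp _ hinj
  have heq : (Subtype.val ∘ (![(⟨u, hu⟩ : t), ⟨v, hv⟩] : Fin 2 → t)) = ![u, v] := by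
    funext i; fin_cases i <;> rfl
  rwa [heq] at this

/-- two elements of a rank ≤ 1 submodule have zero 2×2 determinant under any functionals -/
lemma auxDetZero {L : Type*} [AddCommGroup L] [Module ℝ L] [FiniteDimensional ℝ L]
    (S : Submodule ℝ L) (hS : Module.finrank ℝ S ≤ 1) {u v : L} (hu : u ∈ S) (hv : v ∈ S)
    (lam mu : Module.Dual ℝ L) : lam u * mu v = lam v * mu u := by
  have hni : ¬ LinearIndependent ℝ ![(⟨u, hu⟩ : S), ⟨v, hv⟩] := by
    intro h
    have := h.fintype_card_le_finrank
    simp at this; omega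
  rw [LinearIndependent.pair_iff] at hni
  push_neg at hni
  obtain ⟨a, b, hab, hne⟩ := hni
  have habL : a • u + b • v = 0 := by
    have := congrArg (Subtype.val) hab
    simpa using this
  have h1 : a * lam u + b * lam v = 0 := by
    have := congrArg lam habL; simpa using this
  have h2 : a * mu u + b * mu v = 0 := by
    have := congrArg mu habL; simpa using this
  rcases imp_iff_not_or.mp hne with ha | hb
  · exact mul_left_cancel₀ ha (by linear_combination (mu v) * h1 - (lam v) * h2)
  · exact mul_left_cancel₀ hb (by linear_combination (lam u) * h2 - (mu u) * h1)

/-- there is an element of rank at least 2 -/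
lemma auxBigRank {L : Type*} [LieRing L] [LieAlgebra ℝ L] [FiniteDimensional ℝ L]
    (V₁ V₂ : Submodule ℝ L)
    (hstrat : bracketSpan V₁ V₁ = V₂)
    (hV₂ : Module.finrank ℝ V₂ = 2) :
    ∃ X ∈ V₁, 2 ≤ Module.finrank ℝ (bracketSpan (ℝ ∙ X) V₁) := by
  by_contra hcon
  push_neg at hcon
  have hA : ∀ X ∈ V₁, Module.finrank ℝ (bracketSpan (ℝ ∙ X) V₁) ≤ 1 := by
    intro X hX
    have := hcon X hX; omega
  have hmem : ∀ X, ∀ Y ∈ V₁, ⁅X, Y⁆ ∈ bracketSpan (ℝ ∙ X) V₁ := fun X Y hY =>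
    Submodule.subset_span ⟨X, Submodule.mem_span_singleton_self X, Y, hY, rfl⟩
  have h2 : 2 ≤ Module.finrank ℝ
      (Submodule.span ℝ {z | ∃ x ∈ V₁, ∃ y ∈ V₁, z = ⁅x, y⁆}) := by
    rw [show Submodule.span ℝ {z | ∃ x ∈ V₁, ∃ y ∈ V₁, z = ⁅x, y⁆} = V₂ from hstrat, hV₂]
  obtain ⟨u, hu, v, hv, huv⟩ := auxIndepPair _ h2
  obtain ⟨X₀, hX₀, Y₀, hY₀, rfl⟩ := hu
  obtain ⟨X₁, hX₁, Y₁, hY₁, rfl⟩ := hv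
  obtain ⟨lam, mu, hl1, hl2, hm1, hm2⟩ := auxDualPair huv
  have key : ∀ X ∈ V₁, ∀ Y ∈ V₁, ∀ Z ∈ V₁,
      lam ⁅X, Y⁆ * mu ⁅X, Z⁆ = lam ⁅X, Z⁆ * mu ⁅X, Y⁆ := by
    intro X hX Y hY Z hZ
    exact auxDetZero _ (hA X hX) (hmem X Y hY) (hmem X Z hZ) lam mu
  have pol : ∀ X ∈ V₁, ∀ X' ∈ V₁, ∀ Y ∈ V₁, ∀ Z ∈ V₁,
      lam ⁅X, Y⁆ * mu ⁅X', Z⁆ + lam ⁅X', Y⁆ * mu ⁅X, Z⁆ =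
      lam ⁅X, Z⁆ * mu ⁅X', Y⁆ + lam ⁅X', Z⁆ * mu ⁅X, Y⁆ := by
    intro X hX X' hX' Y hY Z hZ
    have h1 := key X hX Y hY Z hZ
    have h2 := key X' hX' Y hY Z hZ
    have h3 := key (X + X') (add_mem hX hX') Y hY Z hZ
    simp only [add_lie, map_add] at h3
    linear_combination h3 - h1 - h2
  have b0 : ∀ Y ∈ V₁, mu ⁅X₀, Y⁆ = 0 := by
    intro Y hY
    have := key X₀ hX₀ Y hY Y₀ hY₀
    rw [hm1, hl1] at this; linarith [this]
  have star : ∀ X ∈ V₁, ∀ Y ∈ V₁, mu ⁅X, Y⁆ = lam ⁅X₀, Y⁆ * mu ⁅X, Y₀⁆ := by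
    intro X hX Y hY
    have := pol X₀ hX₀ X hX Y₀ hY₀ Y hY
    rw [hl1, hm1, b0 Y hY] at this
    linarith [this]
  have zero : ∀ X ∈ V₁, mu ⁅X, Y₀⁆ = 0 := by
    intro X hX
    have h1 := star Y₀ hY₀ X hX
    rw [show (⁅Y₀, Y₀⁆ : L) = 0 from lie_self Y₀, map_zero, mul_zero] at h1
    have : mu ⁅X, Y₀⁆ = - mu ⁅Y₀, X⁆ := by rw [← map_neg, lie_skew]
    rw [this, h1, neg_zero]
  have final := star X₁ hX₁ Y₁ hY₁
  rw [hm2, zero X₁ hX₁, mul_zero] at final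
  exact one_ne_zero final

variable {L : Type*} [LieRing L] [LieAlgebra ℝ L]
  (V₁ : Submodule ℝ L) {r : ℕ}

/-- the linear polynomial `X ↦ f ⁅X, w⁆` in coordinates -/
noncomputable def linPoly (b : Basis (Fin r) ℝ V₁) (f : Module.Dual ℝ L) (w : L) :
    MvPolynomial (Fin r) ℝ :=
  ∑ i : Fin r, MvPolynomial.C (f ⁅(b i : L), w⁆) * MvPolynomial.X i

lemma linPoly_eval (b : Basis (Fin r) ℝ V₁) (f : Module.Dual ℝ L) (w : L) (Xv : V₁) :
    MvPolynomial.eval (fun i => b.repr Xv i) (linPoly V₁ b f w) = f ⁅(Xv : L), w⁆ := by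
  have hev : MvPolynomial.eval (fun i => b.repr Xv i) (linPoly V₁ b f w) =
      ∑ i : Fin r, f ⁅(b i : L), w⁆ * b.repr Xv i := by
    simp [linPoly]
  rw [hev]
  set F : V₁ →ₗ[ℝ] ℝ :=
    { toFun := fun x => f ⁅(x : L), w⁆
      map_add' := by intro a b; simp [add_lie]
      map_smul' := by intro c a; simp [smul_lie] } with hF
  calc ∑ i : Fin r, f ⁅(b i : L), w⁆ * b.repr Xv i
      = ∑ i : Fin r, b.repr Xv i • F (b i) := by
        apply Finset.sum_congr rfl; intro i _
        simp [hF, mul_comm]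
    _ = F (∑ i : Fin r, b.repr Xv i • b i) := by rw [map_sum]; simp
    _ = F Xv := by rw [b.sum_repr]
    _ = f ⁅(Xv : L), w⁆ := rfl

end Aux

/-- In a step-2 stratified Lie algebra `g = V₁ ⊕ V₂` with `dim V₁ = r ≥ 3`, `dim V₂ = 2`,
the set `R₁` of vectors `X ∈ V₁` of rank at most 1 is contained in a proper algebraic
subvariety of `V₁` (the zero set, in coordinates w.r.t. a basis of `V₁`, of a nonzero
polynomial); in particular `R₁ ≠ V₁`. -/
theorem stmt4 {L : Type*} [LieRing L] [LieAlgebra ℝ L] [FiniteDimensional ℝ L]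
    (V₁ V₂ : Submodule ℝ L)
    (hsum : V₁ ⊔ V₂ = ⊤) (hinter : V₁ ⊓ V₂ = ⊥)
    (hstrat : bracketSpan V₁ V₁ = V₂)
    (hcentral : ∀ x : L, ∀ z ∈ V₂, ⁅x, z⁆ = 0)
    (r : ℕ) (hr : 3 ≤ r) (hV₁ : Module.finrank ℝ V₁ = r)
    (hV₂ : Module.finrank ℝ V₂ = 2) :
    (∃ (b : Module.Basis (Fin r) ℝ V₁) (p : MvPolynomial (Fin r) ℝ), p ≠ 0 ∧
      ∀ X : V₁, Module.finrank ℝ (bracketSpan (ℝ ∙ (X : L)) V₁) ≤ 1 →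
        MvPolynomial.eval (fun i => b.repr X i) p = 0) ∧
    ∃ X ∈ V₁, 2 ≤ Module.finrank ℝ (bracketSpan (ℝ ∙ X) V₁) := by
  obtain ⟨Xs, hXs, hXrank⟩ := auxBigRank V₁ V₂ hstrat hV₂
  refine ⟨?_, Xs, hXs, hXrank⟩
  -- independent pair of brackets with Xs
  obtain ⟨u, hu, v, hv, huv⟩ := auxIndepPair {z | ∃ x ∈ (ℝ ∙ Xs), ∃ y ∈ V₁, z = ⁅x, y⁆} hXrank
  obtain ⟨x₁, hx₁, Y₀, hY₀, rfl⟩ := hu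
  obtain ⟨x₂, hx₂, Z₀, hZ₀, rfl⟩ := hv
  obtain ⟨c, rfl⟩ := Submodule.mem_span_singleton.mp hx₁
  obtain ⟨c', rfl⟩ := Submodule.mem_span_singleton.mp hx₂
  simp only [smul_lie] at huv
  have hc : c ≠ 0 := by
    rintro rfl
    exact (huv.ne_zero 0) (by simp)
  have hc' : c' ≠ 0 := by
    rintro rfl
    exact (huv.ne_zero 1) (by simp)
  obtain ⟨lam, mu, hl1, hl2, hm1, hm2⟩ := auxDualPair huv
  simp only [map_smul, smul_eq_mul] at hl1 hl2 hm1 hm2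
  -- the basis
  let b : Module.Basis (Fin r) ℝ V₁ := (Module.finBasis ℝ V₁).reindex (finCongr hV₁)
  refine ⟨b, linPoly V₁ b lam Y₀ * linPoly V₁ b mu Z₀
      - linPoly V₁ b lam Z₀ * linPoly V₁ b mu Y₀, ?_, ?_⟩
  · -- nonzero: evaluate at Xs
    intro h0
    have := congrArg (MvPolynomial.eval (fun i => b.repr ⟨Xs, hXs⟩ i)) h0
    rw [map_zero, map_sub, map_mul, map_mul, linPoly_eval, linPoly_eval,
      linPoly_eval, linPoly_eval] at this
    simp only at this
    have hfin : (c * c') * (lam ⁅Xs, Y₀⁆ * mu ⁅Xs, Z₀⁆ - lam ⁅Xs, Z₀⁆ * mu ⁅Xs, Y₀⁆)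
        = 1 := by
      linear_combination (c' * mu ⁅Xs, Z₀⁆) * hl1 + hm2 - (c * mu ⁅Xs, Y₀⁆) * hl2
    rw [this, mul_zero] at hfin
    exact one_ne_zero hfin.symm
  · -- vanishing on the rank ≤ 1 set
    intro X hX
    rw [map_sub, map_mul, map_mul, linPoly_eval, linPoly_eval, linPoly_eval, linPoly_eval]
    have hmem : ∀ Y ∈ V₁, ⁅(X : L), Y⁆ ∈ bracketSpan (ℝ ∙ (X : L)) V₁ := fun Y hY =>
      Submodule.subset_span ⟨(X : L), Submodule.mem_span_singleton_self _, Y, hY, rfl⟩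
    have := auxDetZero _ hX (hmem Y₀ hY₀) (hmem Z₀ hZ₀) lam mu
    linarith [this]
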